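/- Let n ∈ ℕ, (F,σ) ∈ 𝒢ₛ_n, and let G be a nonempty subset of F. Then (G,σ) ∈ 𝒢ₛ_n. Consequently, the family 𝒢_n is hereditary: if F ∈ 𝒢_n and G ⊆ F, then G ∈ 𝒢_n. -/

import Mathlib

abbrev Cantor : Type := ℕ → Bool

/- `wedgeLen σ τ` is the length `|σ∧τ| ∈ ℕ∞` of the longest common initial segment
of `σ` and `τ` (`⊤` if `σ = τ`).  Since wedges `σ∧τ`, `σ∧τ'` of a common sequence are
initial segments of that sequence, comparisons `⊑`, `⊏`, `=` between such wedges are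
equivalent to `≤`, `<`, `=` between their lengths. -/
open Classical in
noncomputable def wedgeLen (σ τ : Cantor) : ℕ∞ :=
  if h : σ = τ then ⊤ else ((Nat.find (Function.ne_iff.mp h) : ℕ) : ℕ∞)

/-- `GS n F σ m M` : the pair `(F,σ)` belongs to `𝒢ₛ_n` via a derivation attaching the
values `min(F,σ) = m` and `max(F,σ) = M`. -/
inductive GS : ℕ → Finset Cantor → Cantor → ℕ∞ → ℕ∞ → Prop
  | base (d : ℕ) (τ : Fin (d + 1) → Cantor) (σ : Cantor) (F : Finset Cantor)
      (h1 : ∀ i, σ ≠ τ i)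
      (h2 : 0 < wedgeLen σ (τ 0))
      (h3 : ∀ i j : Fin (d + 1), i < j → wedgeLen σ (τ i) < wedgeLen σ (τ j))
      (h4 : ((d + 1 : ℕ) : ℕ∞) ≤ wedgeLen σ (τ 0))
      (hF : ∀ x, x ∈ F ↔ ∃ i, x = τ i) :
      GS 1 F σ (wedgeLen σ (τ 0)) (wedgeLen σ (τ (Fin.last d)))
  | up (n : ℕ) (F : Finset Cantor) (σ : Cantor) (m M : ℕ∞) :
      GS n F σ m M → GS (n + 1) F σ m M
  | skipped (n : ℕ) (d : ℕ) (Fs : Fin (d + 1) → Finset Cantor)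
      (σs : Fin (d + 1) → Cantor) (mins maxs : Fin (d + 1) → ℕ∞)
      (σ : Cantor) (F : Finset Cantor)
      (hGS : ∀ i, GS n (Fs i) (σs i) (mins i) (maxs i))
      (hdisj : ∀ i j : Fin (d + 1), i ≠ j → ∀ x, x ∈ Fs i → x ∉ Fs j)
      (hne : ∀ i, σ ≠ σs i)
      (h0 : 0 < wedgeLen σ (σs 0))
      (hmono : ∀ i j : Fin (d + 1), i < j → wedgeLen σ (σs i) < wedgeLen σ (σs j))
      (hlt : ∀ i, wedgeLen σ (σs i) < mins i)
      (hd : ((d + 1 : ℕ) : ℕ∞) ≤ wedgeLen σ (σs 0))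
      (hF : ∀ x, x ∈ F ↔ ∃ i, x ∈ Fs i) :
      GS (n + 1) F σ (wedgeLen σ (σs 0)) (wedgeLen σ (σs (Fin.last d)))
  | attached (n : ℕ) (d : ℕ) (Fs : Fin (d + 1) → Finset Cantor)
      (mins maxs : Fin (d + 1) → ℕ∞) (σ : Cantor) (F : Finset Cantor)
      (hGS : ∀ i, GS n (Fs i) σ (mins i) (maxs i))
      (hdisj : ∀ i j : Fin (d + 1), i ≠ j → ∀ x, x ∈ Fs i → x ∉ Fs j)
      (hord : ∀ i : Fin d, maxs i.castSucc < mins i.succ)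
      (hd : ((d + 1 : ℕ) : ℕ∞) ≤ mins 0)
      (hF : ∀ x, x ∈ F ↔ ∃ i, x ∈ Fs i) :
      GS (n + 1) F σ (mins 0) (maxs (Fin.last d))

/-- The family `𝒢_n` of finite subsets of the Cantor set. -/
def Gfam (n : ℕ) : Set (Finset Cantor) :=
  {F | F = ∅ ∨ ∃ σ m M, GS n F σ m M}


section Aux

lemma mono_of_strict {k : ℕ} (w : Fin k → ℕ∞) (h : ∀ i j, i < j → w i < w j)
    {i j : Fin k} (hij : i ≤ j) : w i ≤ w j := by
  rcases hij.lt_or_eq with h' | h'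
  · exact (h i j h').le
  · rw [h']

lemma chain_lt {d : ℕ} (mins maxs : Fin (d + 1) → ℕ∞)
    (hmm : ∀ i, mins i ≤ maxs i)
    (hord : ∀ i : Fin d, maxs i.castSucc < mins i.succ)
    {i j : Fin (d + 1)} (hij : i < j) : maxs i < mins j := by
  induction j using Fin.induction with
  | zero => exact absurd hij (Fin.not_lt.mpr (Fin.zero_le i))
  | succ k ih =>
    rcases (Fin.le_castSucc_iff.mpr hij).lt_or_eq with h' | h'
    · exact (ih h').trans_le ((hmm _).trans (hord k).le)
    · exact h' ▸ hord k

lemma mins_mono {d : ℕ} (mins maxs : Fin (d + 1) → ℕ∞)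
    (hmm : ∀ i, mins i ≤ maxs i)
    (hord : ∀ i : Fin d, maxs i.castSucc < mins i.succ)
    {i j : Fin (d + 1)} (hij : i ≤ j) : mins i ≤ mins j := by
  rcases hij.lt_or_eq with h' | h'
  · exact (hmm i).trans (chain_lt mins maxs hmm hord h').le
  · rw [h']

lemma maxs_mono {d : ℕ} (mins maxs : Fin (d + 1) → ℕ∞)
    (hmm : ∀ i, mins i ≤ maxs i)
    (hord : ∀ i : Fin d, maxs i.castSucc < mins i.succ)
    {i j : Fin (d + 1)} (hij : i ≤ j) : maxs i ≤ maxs j := by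
  rcases hij.lt_or_eq with h' | h'
  · exact ((chain_lt mins maxs hmm hord h').trans_le (hmm j)).le
  · rw [h']

lemma GS_min_le_max {n : ℕ} {F : Finset Cantor} {σ : Cantor} {m M : ℕ∞}
    (h : GS n F σ m M) : m ≤ M := by
  induction h with
  | base d τ σ F h1 h2 h3 h4 hF =>
      exact mono_of_strict (fun i => wedgeLen σ (τ i))
        (fun i j hij => h3 i j hij) (Fin.zero_le _)
  | up n F σ m M h ih => exact ih
  | skipped n d Fs σs mins maxs σ F hGS hdisj hne h0 hmono hlt hd hF ih =>
      exact mono_of_strict (fun i => wedgeLen σ (σs i))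
        (fun i j hij => hmono i j hij) (Fin.zero_le _)
  | attached n d Fs mins maxs σ F hGS hdisj hord hd hF ih =>
      exact (ih 0).trans (maxs_mono mins maxs ih hord (Fin.zero_le _))

lemma GS_subset {n : ℕ} {F : Finset Cantor} {σ : Cantor} {m M : ℕ∞}
    (h : GS n F σ m M) :
    ∀ G : Finset Cantor, G ⊆ F → G.Nonempty →
      ∃ m' M', GS n G σ m' M' ∧ m ≤ m' ∧ M' ≤ M := by
  induction h with
  | base d τ σ F h1 h2 h3 h4 hF =>
      intro G hGF hGne
      classical
      set S : Finset (Fin (d + 1)) := Finset.univ.filter (fun i => τ i ∈ G) with hSdef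
      have hSne : S.Nonempty := by
        obtain ⟨x, hx⟩ := hGne
        obtain ⟨i, rfl⟩ := (hF x).mp (hGF hx)
        exact ⟨i, by simp [hSdef, hx]⟩
      obtain ⟨e, he⟩ : ∃ e, S.card = e + 1 :=
        ⟨S.card - 1, (Nat.succ_pred_eq_of_pos hSne.card_pos).symm⟩
      let f := S.orderIsoOfFin he
      have hfmono : ∀ {k l : Fin (e + 1)}, k < l → (f k : Fin (d + 1)) < (f l : Fin (d + 1)) :=
        fun {k l} hkl => Subtype.coe_lt_coe.mpr (f.lt_iff_lt.mpr hkl)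
      have hfle : ∀ {k l : Fin (e + 1)}, k ≤ l → (f k : Fin (d + 1)) ≤ (f l : Fin (d + 1)) :=
        fun {k l} hkl => Subtype.coe_le_coe.mpr (f.le_iff_le.mpr hkl)
      have hcard : e + 1 ≤ d + 1 := by
        rw [← he]
        simpa using S.card_le_univ
      refine ⟨_, _, GS.base e (fun k => τ (f k)) σ G (fun k => h1 _)
        (h2.trans_le (mono_of_strict _ (fun i j hij => h3 i j hij) (Fin.zero_le _)))
        (fun k l hkl => h3 _ _ (hfmono hkl))
        (le_trans (by exact_mod_cast hcard)
          ((h4.trans (mono_of_strict _ (fun i j hij => h3 i j hij) (Fin.zero_le _)))))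
        ?_, ?_, ?_⟩
      · intro x
        constructor
        · intro hx
          obtain ⟨i, rfl⟩ := (hF x).mp (hGF hx)
          have hiS : i ∈ S := by simp [hSdef, hx]
          obtain ⟨k, hk⟩ := f.surjective ⟨i, hiS⟩
          exact ⟨k, by simp [hk]⟩
        · rintro ⟨k, rfl⟩
          exact (Finset.mem_filter.mp (f k).2).2
      · exact mono_of_strict (fun i => wedgeLen σ (τ i))
          (fun i j hij => h3 i j hij) (Fin.zero_le _)
      · exact mono_of_strict (fun i => wedgeLen σ (τ i))
          (fun i j hij => h3 i j hij) (Fin.le_last _)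
  | up n F σ m M h ih =>
      intro G hGF hGne
      obtain ⟨m', M', h', hm, hM⟩ := ih G hGF hGne
      exact ⟨m', M', GS.up _ _ _ _ _ h', hm, hM⟩
  | skipped n d Fs σs mins maxs σ F hGS hdisj hne h0 hmono hlt hd hF ih =>
      intro G hGF hGne
      classical
      set S : Finset (Fin (d + 1)) := Finset.univ.filter (fun i => (G ∩ Fs i).Nonempty)
        with hSdef
      have hSne : S.Nonempty := by
        obtain ⟨x, hx⟩ := hGne
        obtain ⟨i, hi⟩ := (hF x).mp (hGF hx)
        refine ⟨i, Finset.mem_filter.mpr ⟨Finset.mem_univ i, ⟨x, Finset.mem_inter.mpr ⟨hx, hi⟩⟩⟩⟩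
      obtain ⟨e, he⟩ : ∃ e, S.card = e + 1 :=
        ⟨S.card - 1, (Nat.succ_pred_eq_of_pos hSne.card_pos).symm⟩
      let f := S.orderIsoOfFin he
      have hfmono : ∀ {k l : Fin (e + 1)}, k < l → (f k : Fin (d + 1)) < (f l : Fin (d + 1)) :=
        fun {k l} hkl => Subtype.coe_lt_coe.mpr (f.lt_iff_lt.mpr hkl)
      have hfne : ∀ {k l : Fin (e + 1)}, k ≠ l → (f k : Fin (d + 1)) ≠ (f l : Fin (d + 1)) := by
        intro k l hkl hc
        exact hkl (f.injective (Subtype.coe_injective hc))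
      have hcard : e + 1 ≤ d + 1 := by
        rw [← he]; simpa using S.card_le_univ
      have hknon : ∀ k : Fin (e + 1), (G ∩ Fs (f k)).Nonempty :=
        fun k => (Finset.mem_filter.mp (f k).2).2
      have hIH := fun k : Fin (e + 1) =>
        ih (f k) (G ∩ Fs (f k)) (Finset.inter_subset_right) (hknon k)
      choose mins' maxs' hGS' hm' hM' using hIH
      refine ⟨_, _, GS.skipped n e (fun k => G ∩ Fs (f k)) (fun k => σs (f k))
        mins' maxs' σ G hGS'
        (fun k l hkl x hxk hxl => hdisj (f k) (f l) (hfne hkl) x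
          (Finset.mem_inter.mp hxk).2 (Finset.mem_inter.mp hxl).2)
        (fun k => hne _)
        (h0.trans_le (mono_of_strict _ (fun i j hij => hmono i j hij) (Fin.zero_le _)))
        (fun k l hkl => hmono _ _ (hfmono hkl))
        (fun k => (hlt (f k)).trans_le (hm' k))
        (le_trans (by exact_mod_cast hcard)
          (hd.trans (mono_of_strict _ (fun i j hij => hmono i j hij) (Fin.zero_le _))))
        ?_, ?_, ?_⟩
      · intro x
        constructor
        · intro hx
          obtain ⟨i, hi⟩ := (hF x).mp (hGF hx)
          have hiS : i ∈ S :=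
            Finset.mem_filter.mpr ⟨Finset.mem_univ i, ⟨x, Finset.mem_inter.mpr ⟨hx, hi⟩⟩⟩
          obtain ⟨k, hk⟩ := f.surjective ⟨i, hiS⟩
          exact ⟨k, by simp only [hk]; exact Finset.mem_inter.mpr ⟨hx, hi⟩⟩
        · rintro ⟨k, hk⟩
          exact (Finset.mem_inter.mp hk).1
      · exact mono_of_strict (fun i => wedgeLen σ (σs i))
          (fun i j hij => hmono i j hij) (Fin.zero_le _)
      · exact mono_of_strict (fun i => wedgeLen σ (σs i))
          (fun i j hij => hmono i j hij) (Fin.le_last _)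
  | attached n d Fs mins maxs σ F hGS hdisj hord hd hF ih =>
      intro G hGF hGne
      classical
      have hmm : ∀ i, mins i ≤ maxs i := fun i => GS_min_le_max (hGS i)
      set S : Finset (Fin (d + 1)) := Finset.univ.filter (fun i => (G ∩ Fs i).Nonempty)
        with hSdef
      have hSne : S.Nonempty := by
        obtain ⟨x, hx⟩ := hGne
        obtain ⟨i, hi⟩ := (hF x).mp (hGF hx)
        refine ⟨i, Finset.mem_filter.mpr ⟨Finset.mem_univ i, ⟨x, Finset.mem_inter.mpr ⟨hx, hi⟩⟩⟩⟩
      obtain ⟨e, he⟩ : ∃ e, S.card = e + 1 :=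
        ⟨S.card - 1, (Nat.succ_pred_eq_of_pos hSne.card_pos).symm⟩
      let f := S.orderIsoOfFin he
      have hfmono : ∀ {k l : Fin (e + 1)}, k < l → (f k : Fin (d + 1)) < (f l : Fin (d + 1)) :=
        fun {k l} hkl => Subtype.coe_lt_coe.mpr (f.lt_iff_lt.mpr hkl)
      have hfle : ∀ {k l : Fin (e + 1)}, k ≤ l → (f k : Fin (d + 1)) ≤ (f l : Fin (d + 1)) :=
        fun {k l} hkl => Subtype.coe_le_coe.mpr (f.le_iff_le.mpr hkl)
      have hfne : ∀ {k l : Fin (e + 1)}, k ≠ l → (f k : Fin (d + 1)) ≠ (f l : Fin (d + 1)) := by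
        intro k l hkl hc
        exact hkl (f.injective (Subtype.coe_injective hc))
      have hcard : e + 1 ≤ d + 1 := by
        rw [← he]; simpa using S.card_le_univ
      have hknon : ∀ k : Fin (e + 1), (G ∩ Fs (f k)).Nonempty :=
        fun k => (Finset.mem_filter.mp (f k).2).2
      have hIH := fun k : Fin (e + 1) =>
        ih (f k) (G ∩ Fs (f k)) (Finset.inter_subset_right) (hknon k)
      choose mins' maxs' hGS' hm' hM' using hIH
      refine ⟨_, _, GS.attached n e (fun k => G ∩ Fs (f k)) mins' maxs' σ G hGS'
        (fun k l hkl x hxk hxl => hdisj (f k) (f l) (hfne hkl) x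
          (Finset.mem_inter.mp hxk).2 (Finset.mem_inter.mp hxl).2)
        ?_ ?_ ?_, ?_, ?_⟩
      · intro k
        have h1 : maxs' k.castSucc ≤ maxs (f k.castSucc) := hM' _
        have h2 : maxs (f k.castSucc) < mins (f k.succ) :=
          chain_lt mins maxs hmm hord (hfmono (Fin.castSucc_lt_succ : k.castSucc < k.succ))
        exact h1.trans_lt (h2.trans_le (hm' _))
      · refine le_trans (show ((e + 1 : ℕ) : ℕ∞) ≤ ((d + 1 : ℕ) : ℕ∞) by exact_mod_cast hcard) ?_
        exact hd.trans ((mins_mono mins maxs hmm hord (Fin.zero_le _)).trans (hm' 0))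
      · intro x
        constructor
        · intro hx
          obtain ⟨i, hi⟩ := (hF x).mp (hGF hx)
          have hiS : i ∈ S :=
            Finset.mem_filter.mpr ⟨Finset.mem_univ i, ⟨x, Finset.mem_inter.mpr ⟨hx, hi⟩⟩⟩
          obtain ⟨k, hk⟩ := f.surjective ⟨i, hiS⟩
          exact ⟨k, by simp only [hk]; exact Finset.mem_inter.mpr ⟨hx, hi⟩⟩
        · rintro ⟨k, hk⟩
          exact (Finset.mem_inter.mp hk).1
      · exact (mins_mono mins maxs hmm hord (Fin.zero_le _)).trans (hm' 0)
      · exact (hM' _).trans (maxs_mono mins maxs hmm hord (Fin.le_last _))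

end Aux

theorem GS_hereditary (n : ℕ) (hn : 1 ≤ n) :
    (∀ (F : Finset Cantor) (σ : Cantor) (m M : ℕ∞), GS n F σ m M →
      ∀ G : Finset Cantor, G ⊆ F → G.Nonempty → ∃ m' M', GS n G σ m' M') ∧
    (∀ F ∈ Gfam n, ∀ G ⊆ F, G ∈ Gfam n) := by
  constructor
  · intro F σ m M h G hGF hGne
    obtain ⟨m', M', h', _, _⟩ := GS_subset h G hGF hGne
    exact ⟨m', M', h'⟩
  · intro F hFmem G hGF
    rcases Finset.eq_empty_or_nonempty G with rfl | hGne
    · exact Or.inl rfl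
    · rcases hFmem with rfl | ⟨σ, m, M, h⟩
      · exact absurd (hGne.mono hGF) (by simp)
      · obtain ⟨m', M', h', _, _⟩ := GS_subset h G hGF hGne
        exact Or.inr ⟨σ, m', M', h'⟩
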